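/- Let Ext: {0,1}^{n_1}×{0,1}^{n_2} → {0,1}^d be a (k_1,k_2,ε) quantum-proof two-source extractor in the Markov model, strong in the first input, and let Ext′: {0,1}^{n_1}×{0,1}^{d} → {0,1}^m be a (k_1,ε′) quantum-proof seeded extractor. Define Ext″: {0,1}^{n_1}×{0,1}^{n_2} → {0,1}^m by Ext″(x_1,x_2) := Ext′(x_1, Ext(x_1,x_2)). Then Ext″ is a (k_1,k_2,ε+ε′) quantum-proof two-source extractor in the Markov model; that is, for every Markov state ρ on {0,1}^{n_1}×{0,1}^{n_2} with side information C satisfying H_min(X_1|C)_ρ ≥ k_1 and H_min(X_2|C)_ρ ≥ k_2, one has (1/2)∑_{y∈{0,1}^m} ‖∑_{(x_1,x_2): Ext″(x_1,x_2)=y} ρ(x_1,x_2) − (1/2^m)ρ_C‖₁ ≤ ε + ε′. -/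

import Mathlib

open Kronecker Matrix
open scoped ComplexOrder

/-- Trace norm of a complex matrix: `Tr √(Rᴴ R)`. -/
noncomputable def traceNorm {n : Type*} [Fintype n] [DecidableEq n] (R : Matrix n n ℂ) : ℝ :=
  (((Matrix.posSemidef_conjTranspose_mul_self R).1.eigenvectorUnitary : Matrix n n ℂ) *
    Matrix.diagonal (((↑) : ℝ → ℂ) ∘ (√·) ∘ (Matrix.posSemidef_conjTranspose_mul_self R).1.eigenvalues) *
    (star (Matrix.posSemidef_conjTranspose_mul_self R).1.eigenvectorUnitary : Matrix n n ℂ)).trace.re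

/-- `H_min(S|C)_ρ ≥ k` for a (possibly subnormalized) cq-state `ρ`:
for every POVM `{E s}`, `∑ s Tr(E s ρ s) ≤ 2^(-k)`. -/
def HminGe {S C : Type*} [Fintype S] [Fintype C] [DecidableEq C]
    (ρ : S → Matrix C C ℂ) (k : ℝ) : Prop :=
  ∀ E : S → Matrix C C ℂ, (∀ s, (E s).PosSemidef) → (∑ s, E s) = 1 →
    (∑ s, (E s * ρ s).trace).re ≤ (2:ℝ) ^ (-k)

/-- The ccq Markov state `∑ t p(t) • ρ₁ᵗ(x₁) ⊗ ρ₂ᵗ(x₂) ⊗ |t⟩⟨t|` on `C = C₁ ⊗ C₂ ⊗ ℂ^T`. -/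
noncomputable def markovState {n1 n2 d1 d2 : ℕ} {T : Type*} [Fintype T] [DecidableEq T]
    (p : T → ℝ)
    (ρ1 : T → (Fin n1 → Bool) → Matrix (Fin d1) (Fin d1) ℂ)
    (ρ2 : T → (Fin n2 → Bool) → Matrix (Fin d2) (Fin d2) ℂ)
    (x1 : Fin n1 → Bool) (x2 : Fin n2 → Bool) :
    Matrix (Fin d1 × Fin d2 × T) (Fin d1 × Fin d2 × T) ℂ :=
  ∑ t, p t • (ρ1 t x1 ⊗ₖ (ρ2 t x2 ⊗ₖ Matrix.single t t (1:ℂ)))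

/-- `Ext` is a `(k₁,k₂,ε)` quantum-proof two-source extractor in the Markov model,
strong in `X₁` (with `d` output bits). -/
def QProofMarkovStrong1 (n1 n2 d : ℕ)
    (Ext : (Fin n1 → Bool) → (Fin n2 → Bool) → Fin d → Bool) (k1 k2 ε : ℝ) : Prop :=
  ∀ (d1 d2 : ℕ) (T : Type) [Fintype T] [DecidableEq T] (p : T → ℝ)
    (ρ1 : T → (Fin n1 → Bool) → Matrix (Fin d1) (Fin d1) ℂ)
    (ρ2 : T → (Fin n2 → Bool) → Matrix (Fin d2) (Fin d2) ℂ),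
    (∀ t, 0 ≤ p t) → (∑ t, p t) = 1 →
    (∀ t x1, (ρ1 t x1).PosSemidef) → (∀ t, (∑ x1, (ρ1 t x1).trace) = 1) →
    (∀ t x2, (ρ2 t x2).PosSemidef) → (∀ t, (∑ x2, (ρ2 t x2).trace) = 1) →
    HminGe (fun x1 => ∑ x2, markovState p ρ1 ρ2 x1 x2) k1 →
    HminGe (fun x2 => ∑ x1, markovState p ρ1 ρ2 x1 x2) k2 →
    (1/2) * ∑ y : Fin d → Bool, ∑ x1,
      traceNorm ((∑ x2 ∈ Finset.univ.filter (fun x2 => Ext x1 x2 = y),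
          markovState p ρ1 ρ2 x1 x2)
        - ((2:ℝ)^d)⁻¹ • ∑ x2, markovState p ρ1 ρ2 x1 x2) ≤ ε

set_option linter.unusedSectionVars false

namespace TN
variable {n : Type*} [Fintype n] [DecidableEq n]
open scoped MatrixOrder

lemma traceNorm_eq_csqrt (R : Matrix n n ℂ) : traceNorm R = (CFC.sqrt (Rᴴ * R)).trace.re := by
  have hP := posSemidef_conjTranspose_mul_self R
  rw [CFC.sqrt_eq_real_sqrt _ hP.nonneg, cfcₙ_eq_cfc, hP.1.cfc_eq]
  rfl

lemma traceNorm_eq_of_sq (R : Matrix n n ℂ) {S : Matrix n n ℂ} (hS : S.PosSemidef)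
    (h : S ^ 2 = Rᴴ * R) : traceNorm R = S.trace.re := by
  rw [traceNorm_eq_csqrt, CFC.sqrt_unique (b := S) (by rw [← h, pow_two]) hS.nonneg]

lemma traceNorm_zero : traceNorm (0 : Matrix n n ℂ) = 0 := by
  rw [traceNorm_eq_of_sq 0 Matrix.PosSemidef.zero (by simp)]
  simp

lemma uconj_mul {V : Matrix n n ℂ} (hV : Vᴴ * V = 1) (d e : n → ℂ) :
    (V * diagonal d * Vᴴ) * (V * diagonal e * Vᴴ) = V * diagonal (d * e) * Vᴴ := by
  simp only [Matrix.mul_assoc]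
  rw [← Matrix.mul_assoc Vᴴ V, hV, Matrix.one_mul, ← Matrix.mul_assoc (diagonal d),
    diagonal_mul_diagonal]
  rfl

lemma trace_uconj {V : Matrix n n ℂ} (hV : Vᴴ * V = 1) (D : Matrix n n ℂ) :
    (V * D * Vᴴ).trace = D.trace := by
  rw [Matrix.mul_assoc, trace_mul_comm, Matrix.mul_assoc, hV, Matrix.mul_one]

lemma traceNorm_hermitian {A : Matrix n n ℂ} (hA : A.IsHermitian) :
    traceNorm A = ∑ i, |hA.eigenvalues i| := by
  set V : Matrix n n ℂ := (hA.eigenvectorUnitary : Matrix n n ℂ)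
  have hV : Vᴴ * V = 1 := by
    simpa [Matrix.star_eq_conjTranspose] using hA.eigenvectorUnitary.2.1
  have hspec : A = V * diagonal (Complex.ofReal ∘ hA.eigenvalues) * Vᴴ := by
    simpa [Matrix.star_eq_conjTranspose] using hA.spectral_theorem
  have hS : (V * diagonal (Complex.ofReal ∘ fun i => |hA.eigenvalues i|) * Vᴴ).PosSemidef := by
    refine PosSemidef.mul_mul_conjTranspose_same ?_ V
    refine posSemidef_diagonal_iff.mpr fun i => ?_
    rw [Function.comp_apply]
    exact_mod_cast Complex.zero_le_real.mpr (abs_nonneg _)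
  rw [traceNorm_eq_of_sq A hS ?hsq]
  · rw [trace_uconj hV, trace_diagonal]
    simp [Complex.re_sum]
  case hsq =>
    rw [pow_two, uconj_mul hV, hA.eq]
    conv_rhs => rw [hspec]
    rw [uconj_mul hV]
    have : ((Complex.ofReal ∘ fun i => |hA.eigenvalues i|) *
        (Complex.ofReal ∘ fun i => |hA.eigenvalues i|))
        = (Complex.ofReal ∘ hA.eigenvalues) * (Complex.ofReal ∘ hA.eigenvalues) := by
      funext i
      simp only [Pi.mul_apply, Function.comp_apply, ← Complex.ofReal_mul, ← abs_mul,
        abs_mul_self]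
    rw [this]

lemma re_trace_sign_mul_le (s : n → ℝ) (hs : ∀ i, |s i| ≤ 1)
    {V : Matrix n n ℂ} (hV : Vᴴ * V = 1) (hV2 : V * Vᴴ = 1)
    {B : Matrix n n ℂ} (hB : B.IsHermitian) :
    ((V * diagonal (Complex.ofReal ∘ s) * Vᴴ * B).trace).re ≤ traceNorm B := by
  set W : Matrix n n ℂ := (hB.eigenvectorUnitary : Matrix n n ℂ) with hWdef
  have hW : Wᴴ * W = 1 := by
    simpa [Matrix.star_eq_conjTranspose] using hB.eigenvectorUnitary.2.1
  have hspec : B = W * diagonal (Complex.ofReal ∘ hB.eigenvalues) * Wᴴ := by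
    simpa [Matrix.star_eq_conjTranspose] using hB.spectral_theorem
  set M : Matrix n n ℂ := Vᴴ * W with hM
  have hMM : Mᴴ * M = 1 := by
    rw [hM, conjTranspose_mul, conjTranspose_conjTranspose, Matrix.mul_assoc,
      ← Matrix.mul_assoc V Vᴴ W, hV2, Matrix.one_mul, hW]
  have hMcol : ∀ l, ∑ k, Complex.normSq (M k l) = 1 := by
    intro l
    have h2 := congrArg (fun X : Matrix n n ℂ => (X l l).re) hMM
    simp only [Matrix.mul_apply, conjTranspose_apply, Matrix.one_apply_eq, Complex.one_re,
      Complex.re_sum] at h2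
    rw [← h2]
    apply Finset.sum_congr rfl
    intro k _
    rw [mul_comm]
    rw [show star (M k l) = (starRingEnd ℂ) (M k l) from rfl, Complex.mul_conj,
      Complex.ofReal_re]
  have key : V * diagonal (Complex.ofReal ∘ s) * Vᴴ * B
      = V * (diagonal (Complex.ofReal ∘ s) * (M * diagonal (Complex.ofReal ∘ hB.eigenvalues) * Mᴴ)) * Vᴴ := by
    conv_lhs => rw [hspec]
    rw [hM]
    simp only [conjTranspose_mul, conjTranspose_conjTranspose, Matrix.mul_assoc]
    rw [hV2, Matrix.mul_one]
  have hNkk : ∀ k, (M * diagonal (Complex.ofReal ∘ hB.eigenvalues) * Mᴴ) k k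
      = ∑ l, M k l * Complex.ofReal (hB.eigenvalues l) * star (M k l) := by
    intro k
    rw [Matrix.mul_apply]
    apply Finset.sum_congr rfl
    intro l _
    rw [Matrix.mul_diagonal, conjTranspose_apply]
    rfl
  have hdm : (diagonal (Complex.ofReal ∘ s) *
        (M * diagonal (Complex.ofReal ∘ hB.eigenvalues) * Mᴴ)).trace
      = ∑ k, Complex.ofReal (s k)
          * (M * diagonal (Complex.ofReal ∘ hB.eigenvalues) * Mᴴ) k k := by
    simp [Matrix.trace, Matrix.diag, Matrix.diagonal_mul]
  have tr_eq : ((V * diagonal (Complex.ofReal ∘ s) * Vᴴ * B).trace).re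
      = ∑ k, ∑ l, s k * hB.eigenvalues l * Complex.normSq (M k l) := by
    rw [key, trace_uconj hV, hdm]
    rw [Complex.re_sum]
    apply Finset.sum_congr rfl; intro k _
    rw [hNkk, Finset.mul_sum, Complex.re_sum]
    apply Finset.sum_congr rfl; intro l _
    have : (Complex.ofReal (s k)) * (M k l * (Complex.ofReal (hB.eigenvalues l)) * star (M k l))
        = Complex.ofReal (s k * hB.eigenvalues l * Complex.normSq (M k l)) := by
      rw [mul_comm (M k l) (Complex.ofReal (hB.eigenvalues l)), mul_assoc,
        show star (M k l) = (starRingEnd ℂ) (M k l) from rfl, Complex.mul_conj]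
      push_cast
      ring
    rw [this, Complex.ofReal_re]
  rw [tr_eq, traceNorm_hermitian hB]
  calc ∑ k, ∑ l, s k * hB.eigenvalues l * Complex.normSq (M k l)
      ≤ ∑ k, ∑ l, |hB.eigenvalues l| * Complex.normSq (M k l) := by
        refine Finset.sum_le_sum fun k _ => Finset.sum_le_sum fun l _ => ?_
        have h0 : (0:ℝ) ≤ Complex.normSq (M k l) := Complex.normSq_nonneg _
        have h' : s k * hB.eigenvalues l ≤ |hB.eigenvalues l| := by
          calc s k * hB.eigenvalues l ≤ |s k * hB.eigenvalues l| := le_abs_self _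
            _ = |s k| * |hB.eigenvalues l| := abs_mul _ _
            _ ≤ 1 * |hB.eigenvalues l| :=
                mul_le_mul_of_nonneg_right (hs k) (abs_nonneg _)
            _ = |hB.eigenvalues l| := one_mul _
        exact mul_le_mul_of_nonneg_right h' h0
    _ = ∑ l, |hB.eigenvalues l| := by
        rw [Finset.sum_comm]
        apply Finset.sum_congr rfl
        intro l _
        rw [← Finset.mul_sum, hMcol l, mul_one]

lemma traceNorm_add_le {A B : Matrix n n ℂ} (hA : A.IsHermitian) (hB : B.IsHermitian) :
    traceNorm (A + B) ≤ traceNorm A + traceNorm B := by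
  have hC : (A + B).IsHermitian := hA.add hB
  set V : Matrix n n ℂ := (hC.eigenvectorUnitary : Matrix n n ℂ) with hVdef
  have hV : Vᴴ * V = 1 := by
    simpa [Matrix.star_eq_conjTranspose] using hC.eigenvectorUnitary.2.1
  have hV2 : V * Vᴴ = 1 := by
    simpa [Matrix.star_eq_conjTranspose] using hC.eigenvectorUnitary.2.2
  set s : n → ℝ := fun i => if 0 ≤ hC.eigenvalues i then 1 else -1 with hsdef
  have hs : ∀ i, |s i| ≤ 1 := by
    intro i
    by_cases h : 0 ≤ hC.eigenvalues i <;> simp [hsdef, h]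
  have hspec : A + B = V * diagonal (Complex.ofReal ∘ hC.eigenvalues) * Vᴴ := by
    simpa [Matrix.star_eq_conjTranspose] using hC.spectral_theorem
  have heq : ((V * diagonal (Complex.ofReal ∘ s) * Vᴴ * (A + B)).trace).re
      = traceNorm (A + B) := by
    conv_lhs => rw [hspec]
    rw [uconj_mul hV, trace_uconj hV, trace_diagonal, traceNorm_hermitian hC, Complex.re_sum]
    apply Finset.sum_congr rfl
    intro i _
    by_cases h : 0 ≤ hC.eigenvalues i
    · simp [hsdef, h, abs_of_nonneg h]
    · push_neg at h
      simp [hsdef, not_le.mpr h, abs_of_neg h]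
  have hsplit : ((V * diagonal (Complex.ofReal ∘ s) * Vᴴ * (A + B)).trace).re
      = ((V * diagonal (Complex.ofReal ∘ s) * Vᴴ * A).trace).re
        + ((V * diagonal (Complex.ofReal ∘ s) * Vᴴ * B).trace).re := by
    rw [Matrix.mul_add, trace_add, Complex.add_re]
  have h1 := re_trace_sign_mul_le s hs hV hV2 hA
  have h2 := re_trace_sign_mul_le s hs hV hV2 hB
  linarith [heq, hsplit]

lemma posSemidef_sum {ι : Type*} (F : Finset ι) (f : ι → Matrix n n ℂ)
    (hf : ∀ i ∈ F, (f i).PosSemidef) : (∑ i ∈ F, f i).PosSemidef := by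
  classical
  induction F using Finset.cons_induction with
  | empty => simpa using Matrix.PosSemidef.zero
  | cons a s ha ih =>
    rw [Finset.sum_cons]
    exact (hf a (Finset.mem_cons_self a s)).add
      (ih fun i hi => hf i (Finset.mem_cons_of_mem hi))

lemma isHermitian_sum {ι : Type*} (F : Finset ι) (f : ι → Matrix n n ℂ)
    (hf : ∀ i ∈ F, (f i).IsHermitian) : (∑ i ∈ F, f i).IsHermitian := by
  show (∑ i ∈ F, f i)ᴴ = _
  rw [conjTranspose_sum]
  exact Finset.sum_congr rfl hf

lemma traceNorm_sum_le {ι : Type*} (F : Finset ι) (f : ι → Matrix n n ℂ)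
    (hf : ∀ i ∈ F, (f i).IsHermitian) :
    traceNorm (∑ i ∈ F, f i) ≤ ∑ i ∈ F, traceNorm (f i) := by
  classical
  induction F using Finset.cons_induction with
  | empty => simp [traceNorm_zero]
  | cons a s ha ih =>
    rw [Finset.sum_cons, Finset.sum_cons]
    have h1 : (f a).IsHermitian := hf a (Finset.mem_cons_self a s)
    have hf' : ∀ i ∈ s, (f i).IsHermitian := fun i hi => hf i (Finset.mem_cons_of_mem hi)
    have h2 : (∑ i ∈ s, f i).IsHermitian := isHermitian_sum s f hf'
    exact le_trans (traceNorm_add_le h1 h2) (by linarith [ih hf'])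

variable {m : Type*} [Fintype m] [DecidableEq m]

lemma reindex_smul (e : n ≃ m) (r : ℝ) (M : Matrix n n ℂ) :
    Matrix.reindex e e (r • M) = r • Matrix.reindex e e M := by
  simp [reindex_apply, submatrix_smul]

lemma reindex_sub (e : n ≃ m) (A B : Matrix n n ℂ) :
    Matrix.reindex e e (A - B) = Matrix.reindex e e A - Matrix.reindex e e B := by
  simp [reindex_apply, submatrix_sub]

lemma posSemidef_reindex (e : n ≃ m) {M : Matrix n n ℂ} (h : M.PosSemidef) :
    (Matrix.reindex e e M).PosSemidef := by
  rw [reindex_apply]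
  exact (posSemidef_submatrix_equiv e.symm).mpr h

lemma trace_reindex (e : n ≃ m) (M : Matrix n n ℂ) :
    (Matrix.reindex e e M).trace = M.trace := by
  rw [reindex_apply]
  show ∑ i, M.submatrix e.symm e.symm i i = ∑ j, M j j
  simp only [submatrix_apply]
  exact Equiv.sum_comp e.symm fun j => M j j

lemma reindex_mul (e : n ≃ m) (A B : Matrix n n ℂ) :
    (Matrix.reindex e e A) * (Matrix.reindex e e B) = Matrix.reindex e e (A * B) := by
  simp only [reindex_apply]
  exact submatrix_mul_equiv A B _ _ _

lemma reindex_conjTranspose (e : n ≃ m) (A : Matrix n n ℂ) :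
    (Matrix.reindex e e A)ᴴ = Matrix.reindex e e Aᴴ := by
  simp only [reindex_apply, conjTranspose_submatrix]

lemma traceNorm_reindex (e : n ≃ m) (R : Matrix n n ℂ) :
    traceNorm (Matrix.reindex e e R) = traceNorm R := by
  have hpsd := (CFC.sqrt_nonneg (Rᴴ * R)).posSemidef
  have hsq : (Matrix.reindex e e (CFC.sqrt (Rᴴ * R))) ^ 2
      = (Matrix.reindex e e R)ᴴ * (Matrix.reindex e e R) := by
    rw [pow_two, reindex_mul, reindex_conjTranspose, reindex_mul,
      CFC.sqrt_mul_sqrt_self _ (posSemidef_conjTranspose_mul_self R).nonneg]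
  rw [traceNorm_eq_of_sq _ (posSemidef_reindex e hpsd) hsq, trace_reindex]
  rw [traceNorm_eq_csqrt]

lemma reindex_sum {ι : Type*} (e : n ≃ m) (F : Finset ι) (f : ι → Matrix n n ℂ) :
    Matrix.reindex e e (∑ i ∈ F, f i) = ∑ i ∈ F, Matrix.reindex e e (f i) := by
  ext i j
  simp [reindex_apply, submatrix_apply, Finset.sum_apply, Matrix.sum_apply]

lemma hminGe_reindex {S' : Type*} [Fintype S'] (e : n ≃ m) (ρ : S' → Matrix n n ℂ) (k : ℝ)
    (h : HminGe ρ k) : HminGe (fun x => Matrix.reindex e e (ρ x)) k := by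
  intro E hE hsum
  have key : ∀ x, ((E x) * Matrix.reindex e e (ρ x)).trace
      = ((Matrix.reindex e.symm e.symm (E x)) * ρ x).trace := by
    intro x
    have : E x = Matrix.reindex e e (Matrix.reindex e.symm e.symm (E x)) := by simp
    rw [this, reindex_mul, trace_reindex]
    simp
  calc (∑ x, ((E x) * Matrix.reindex e e (ρ x)).trace).re
      = (∑ x, ((Matrix.reindex e.symm e.symm (E x)) * ρ x).trace).re := by
        congr 1
        exact Finset.sum_congr rfl fun x _ => key x
    _ ≤ (2:ℝ) ^ (-k) := by
        refine h _ (fun x => posSemidef_reindex e.symm (hE x)) ?_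
        rw [← reindex_sum, hsum]
        simp

lemma posSemidef_real_smul {M : Matrix n n ℂ} (h : M.PosSemidef) {r : ℝ} (hr : 0 ≤ r) :
    (r • M).PosSemidef := by
  have := h.smul (show (0:ℂ) ≤ (r:ℂ) by exact_mod_cast hr)
  have e : r • M = (r:ℂ) • M := by ext i j; simp [Complex.real_smul]
  rw [e]; exact this

lemma conjTranspose_kron {A : Matrix n n ℂ} {B : Matrix m m ℂ} :
    (A ⊗ₖ B)ᴴ = Aᴴ ⊗ₖ Bᴴ := by
  ext i j
  simp only [conjTranspose_apply, Matrix.kroneckerMap_apply, star_mul']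
  try ring

lemma posSemidef_kron {A : Matrix n n ℂ} {B : Matrix m m ℂ}
    (hA : A.PosSemidef) (hB : B.PosSemidef) : (A ⊗ₖ B).PosSemidef := by
  exact hA.kronecker hB

lemma posSemidef_stdBasis {T : Type*} [Fintype T] [DecidableEq T] (t : T) :
    (Matrix.single t t (1:ℂ)).PosSemidef := by
  have : Matrix.single t t (1:ℂ)
      = (Matrix.single t t (1:ℂ))ᴴ * (Matrix.single t t (1:ℂ)) := by
    rw [show (Matrix.single t t (1:ℂ))ᴴ = Matrix.single t t (1:ℂ) by
      ext i j
      simp [conjTranspose_apply, Matrix.single, Matrix.of_apply,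
        apply_ite (star : ℂ → ℂ), and_comm]]
    rw [Matrix.single_mul_single_same, mul_one]
  rw [this]
  exact Matrix.posSemidef_conjTranspose_mul_self _

lemma trace_stdBasis {T : Type*} [Fintype T] [DecidableEq T] (t : T) :
    (Matrix.single t t (1:ℂ)).trace = 1 := by
  simp [Matrix.trace, Matrix.diag, Matrix.single, Matrix.of_apply]
end TN

theorem composition_of_strong_two_source_and_seeded_extractor
    (n1 n2 d m : ℕ)
    (Ext : (Fin n1 → Bool) → (Fin n2 → Bool) → Fin d → Bool)
    (Ext' : (Fin n1 → Bool) → (Fin d → Bool) → Fin m → Bool)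
    (k1 k2 ε ε' : ℝ)
    -- `Ext` is a `(k₁,k₂,ε)` quantum-proof two-source extractor in the Markov model,
    -- strong in the first input:
    (hExt : QProofMarkovStrong1 n1 n2 d Ext k1 k2 ε)
    -- `Ext'` is a `(k₁,ε')` quantum-proof seeded extractor:
    (hExt' : ∀ (e : ℕ) (τ : (Fin n1 → Bool) → Matrix (Fin e) (Fin e) ℂ),
      (∀ x, (τ x).PosSemidef) → (∑ x, (τ x).trace) = 1 →
      HminGe τ k1 →
      (1/2) * ∑ y : Fin m → Bool,
        traceNorm (((2:ℝ)^d)⁻¹ • (∑ xs ∈ Finset.univ.filter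
            (fun xs : (Fin n1 → Bool) × (Fin d → Bool) => Ext' xs.1 xs.2 = y),
            τ xs.1)
          - ((2:ℝ)^m)⁻¹ • ∑ x, τ x) ≤ ε') :
    -- then `Ext''(x₁,x₂) := Ext'(x₁, Ext(x₁,x₂))` is a `(k₁,k₂,ε+ε')` quantum-proof
    -- two-source extractor in the Markov model:
    ∀ (d1 d2 : ℕ) (T : Type) [Fintype T] [DecidableEq T] (p : T → ℝ)
      (ρ1 : T → (Fin n1 → Bool) → Matrix (Fin d1) (Fin d1) ℂ)
      (ρ2 : T → (Fin n2 → Bool) → Matrix (Fin d2) (Fin d2) ℂ),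
      (∀ t, 0 ≤ p t) → (∑ t, p t) = 1 →
      (∀ t x1, (ρ1 t x1).PosSemidef) → (∀ t, (∑ x1, (ρ1 t x1).trace) = 1) →
      (∀ t x2, (ρ2 t x2).PosSemidef) → (∀ t, (∑ x2, (ρ2 t x2).trace) = 1) →
      HminGe (fun x1 => ∑ x2, markovState p ρ1 ρ2 x1 x2) k1 →
      HminGe (fun x2 => ∑ x1, markovState p ρ1 ρ2 x1 x2) k2 →
      (1/2) * ∑ y : Fin m → Bool,
        traceNorm ((∑ x ∈ Finset.univ.filter
            (fun x : (Fin n1 → Bool) × (Fin n2 → Bool) => Ext' x.1 (Ext x.1 x.2) = y),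
            markovState p ρ1 ρ2 x.1 x.2)
          - ((2:ℝ)^m)⁻¹ • ∑ x1, ∑ x2, markovState p ρ1 ρ2 x1 x2)
        ≤ ε + ε' := by
  intro d1 d2 T _ _ p ρ1 ρ2 hp hpsum h1psd h1tr h2psd h2tr hH1 hH2
  classical
  -- abbreviations
  set ρ : (Fin n1 → Bool) → (Fin n2 → Bool) → Matrix (Fin d1 × Fin d2 × T) (Fin d1 × Fin d2 × T) ℂ
    := markovState p ρ1 ρ2 with hρdef
  have hρpsd : ∀ x1 x2, (ρ x1 x2).PosSemidef := by
    intro x1 x2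
    refine TN.posSemidef_sum _ _ fun t _ => ?_
    exact TN.posSemidef_real_smul
      (TN.posSemidef_kron (h1psd t x1)
        (TN.posSemidef_kron (h2psd t x2) (TN.posSemidef_stdBasis t))) (hp t)
  set τ : (Fin n1 → Bool) → Matrix (Fin d1 × Fin d2 × T) (Fin d1 × Fin d2 × T) ℂ
    := fun x1 => ∑ x2, ρ x1 x2 with hτdef
  have hτpsd : ∀ x1, (τ x1).PosSemidef := fun x1 =>
    TN.posSemidef_sum _ _ fun x2 _ => hρpsd x1 x2
  set σ : (Fin n1 → Bool) → (Fin d → Bool) → Matrix (Fin d1 × Fin d2 × T) (Fin d1 × Fin d2 × T) ℂ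
    := fun x1 s => ∑ x2 ∈ Finset.univ.filter (fun x2 => Ext x1 x2 = s), ρ x1 x2 with hσdef
  have hσpsd : ∀ x1 s, (σ x1 s).PosSemidef := fun x1 s =>
    TN.posSemidef_sum _ _ fun x2 _ => hρpsd x1 x2
  set Fy : (Fin m → Bool) → Finset ((Fin n1 → Bool) × (Fin d → Bool)) :=
    fun y => Finset.univ.filter (fun xs => Ext' xs.1 xs.2 = y) with hFydef
  set A : (Fin m → Bool) → Matrix (Fin d1 × Fin d2 × T) (Fin d1 × Fin d2 × T) ℂ :=
    fun y => ∑ x ∈ Finset.univ.filter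
      (fun x : (Fin n1 → Bool) × (Fin n2 → Bool) => Ext' x.1 (Ext x.1 x.2) = y), ρ x.1 x.2
    with hAdef
  set B : (Fin m → Bool) → Matrix (Fin d1 × Fin d2 × T) (Fin d1 × Fin d2 × T) ℂ :=
    fun y => ∑ xs ∈ Fy y, ((2:ℝ)^d)⁻¹ • τ xs.1 with hBdef
  set u : Matrix (Fin d1 × Fin d2 × T) (Fin d1 × Fin d2 × T) ℂ :=
    ((2:ℝ)^m)⁻¹ • ∑ x1, τ x1 with hudef
  -- Step 1 : regroup A y as a sum of σ over the fiber Fy y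
  have step1 : ∀ y, A y = ∑ xs ∈ Fy y, σ xs.1 xs.2 := by
    intro y
    rw [hAdef, hFydef]
    rw [Finset.sum_filter, Fintype.sum_prod_type]
    simp_rw [← Finset.sum_filter]
    rw [Finset.sum_filter, Fintype.sum_prod_type]
    simp_rw [← Finset.sum_filter]
    apply Finset.sum_congr rfl
    intro x1 _
    rw [hσdef]
    rw [Finset.sum_fiberwise_eq_sum_filter Finset.univ
      (Finset.univ.filter (fun s => Ext' x1 s = y)) (fun x2 => Ext x1 x2) (fun x2 => ρ x1 x2)]
    apply Finset.sum_congr _ (fun _ _ => rfl)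
    ext x2
    simp [Finset.mem_filter]
  -- hermitian facts
  have hρh : ∀ x1 x2, (ρ x1 x2).IsHermitian := fun x1 x2 => (hρpsd x1 x2).1
  have hτh : ∀ x1, (τ x1).IsHermitian := fun x1 => (hτpsd x1).1
  have hσh : ∀ x1 s, (σ x1 s).IsHermitian := fun x1 s => (hσpsd x1 s).1
  have hAh : ∀ y, (A y).IsHermitian := fun y =>
    TN.isHermitian_sum _ _ fun x _ => hρh x.1 x.2
  have hsmulτh : ∀ x1, (((2:ℝ)^d)⁻¹ • τ x1).IsHermitian := fun x1 =>
    (TN.posSemidef_real_smul (hτpsd x1) (by positivity)).1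
  have hBh : ∀ y, (B y).IsHermitian := fun y =>
    TN.isHermitian_sum _ _ fun xs _ => hsmulτh xs.1
  have huh : u.IsHermitian :=
    (TN.posSemidef_real_smul (TN.posSemidef_sum _ _ fun x1 _ => hτpsd x1) (by positivity)).1
  -- triangle inequality for each y
  have htri : ∀ y, traceNorm (A y - u)
      ≤ traceNorm (A y - B y) + traceNorm (B y - u) := by
    intro y
    have h1 : (A y - B y).IsHermitian := (hAh y).sub (hBh y)
    have h2 : (B y - u).IsHermitian := (hBh y).sub huh
    have := TN.traceNorm_add_le h1 h2
    rwa [sub_add_sub_cancel] at this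
  -- Step 3 : the two-source extractor bound
  have step3 : (1/2) * ∑ y : Fin m → Bool, traceNorm (A y - B y) ≤ ε := by
    have hbd : ∀ y, traceNorm (A y - B y)
        ≤ ∑ xs ∈ Fy y, traceNorm (σ xs.1 xs.2 - ((2:ℝ)^d)⁻¹ • τ xs.1) := by
      intro y
      rw [step1 y, hBdef, ← Finset.sum_sub_distrib]
      exact TN.traceNorm_sum_le _ _ fun xs _ => (hσh xs.1 xs.2).sub (hsmulτh xs.1)
    have hfib : ∑ y : Fin m → Bool, ∑ xs ∈ Fy y,
          traceNorm (σ xs.1 xs.2 - ((2:ℝ)^d)⁻¹ • τ xs.1)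
        = ∑ s : Fin d → Bool, ∑ x1, traceNorm (σ x1 s - ((2:ℝ)^d)⁻¹ • τ x1) := by
      rw [hFydef]
      rw [Finset.sum_fiberwise_of_maps_to (fun xs _ => Finset.mem_univ (Ext' xs.1 xs.2))
        (fun xs : (Fin n1 → Bool) × (Fin d → Bool) =>
          traceNorm (σ xs.1 xs.2 - ((2:ℝ)^d)⁻¹ • τ xs.1))]
      rw [Fintype.sum_prod_type]
      exact Finset.sum_comm
    have hε := hExt d1 d2 T p ρ1 ρ2 hp hpsum h1psd h1tr h2psd h2tr hH1 hH2
    calc (1/2) * ∑ y : Fin m → Bool, traceNorm (A y - B y)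
        ≤ (1/2) * ∑ y : Fin m → Bool, ∑ xs ∈ Fy y,
            traceNorm (σ xs.1 xs.2 - ((2:ℝ)^d)⁻¹ • τ xs.1) := by
          have := Finset.sum_le_sum (fun y (_ : y ∈ Finset.univ) => hbd y)
          linarith
      _ = (1/2) * ∑ s : Fin d → Bool, ∑ x1,
            traceNorm (σ x1 s - ((2:ℝ)^d)⁻¹ • τ x1) := by rw [hfib]
      _ ≤ ε := hε
  -- Step 4 : the seeded extractor bound, via reindexing to `Fin e`
  have step4 : (1/2) * ∑ y : Fin m → Bool, traceNorm (B y - u) ≤ ε' := by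
    set e : ℕ := Fintype.card (Fin d1 × Fin d2 × T) with hedef
    set eq : (Fin d1 × Fin d2 × T) ≃ Fin e := Fintype.equivFin _ with heqdef
    set τ' : (Fin n1 → Bool) → Matrix (Fin e) (Fin e) ℂ :=
      fun x1 => Matrix.reindex eq eq (τ x1) with hτ'def
    have hτ'psd : ∀ x1, (τ' x1).PosSemidef := fun x1 =>
      TN.posSemidef_reindex eq (hτpsd x1)
    have hτ'tr : ∑ x1, (τ' x1).trace = 1 := by
      simp_rw [hτ'def, TN.trace_reindex]
      -- total trace of the Markov state is 1
      have htr : ∀ x1 x2, (ρ x1 x2).trace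
          = ∑ t, (p t : ℂ) * ((ρ1 t x1).trace * (ρ2 t x2).trace) := by
        intro x1 x2
        rw [hρdef]
        unfold markovState
        rw [trace_sum]
        apply Finset.sum_congr rfl
        intro t _
        rw [trace_smul, trace_kronecker, trace_kronecker, TN.trace_stdBasis, mul_one,
          Complex.real_smul]
      have hinner : ∀ t, (∑ x1, ∑ x2, (p t : ℂ) * ((ρ1 t x1).trace * (ρ2 t x2).trace))
          = (p t : ℂ) := by
        intro t
        have : ∀ x1, ∑ x2, (p t : ℂ) * ((ρ1 t x1).trace * (ρ2 t x2).trace)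
            = (p t : ℂ) * (ρ1 t x1).trace := by
          intro x1
          rw [← Finset.mul_sum, ← Finset.mul_sum, h2tr t, mul_one]
        simp_rw [this]
        rw [← Finset.mul_sum, h1tr t, mul_one]
      calc ∑ x1, (τ x1).trace = ∑ x1, ∑ x2, (ρ x1 x2).trace := by
            simp_rw [hτdef, trace_sum]
        _ = ∑ x1, ∑ x2, ∑ t, (p t : ℂ) * ((ρ1 t x1).trace * (ρ2 t x2).trace) := by
            simp_rw [htr]
        _ = ∑ t, ∑ x1, ∑ x2, (p t : ℂ) * ((ρ1 t x1).trace * (ρ2 t x2).trace) := by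
            have h1 : ∀ x1 : Fin n1 → Bool,
                ∑ x2 : Fin n2 → Bool, ∑ t, (p t : ℂ) * ((ρ1 t x1).trace * (ρ2 t x2).trace)
                = ∑ t, ∑ x2 : Fin n2 → Bool, (p t : ℂ)
                    * ((ρ1 t x1).trace * (ρ2 t x2).trace) :=
              fun _ => Finset.sum_comm
            simp_rw [h1]
            exact Finset.sum_comm
        _ = ∑ t, (p t : ℂ) := Finset.sum_congr rfl fun t _ => hinner t
        _ = 1 := by exact_mod_cast congrArg (Complex.ofReal) hpsum
    have hτ'min : HminGe τ' k1 := TN.hminGe_reindex eq τ k1 hH1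
    have hε' := hExt' e τ' hτ'psd hτ'tr hτ'min
    have hre : ∀ y, traceNorm (((2:ℝ)^d)⁻¹ • (∑ xs ∈ Fy y, τ' xs.1)
        - ((2:ℝ)^m)⁻¹ • ∑ x1, τ' x1) = traceNorm (B y - u) := by
      intro y
      have hrw : ((2:ℝ)^d)⁻¹ • (∑ xs ∈ Fy y, τ' xs.1) - ((2:ℝ)^m)⁻¹ • ∑ x1, τ' x1
          = Matrix.reindex eq eq (B y - u) := by
        rw [TN.reindex_sub, hBdef, hudef, TN.reindex_smul, TN.reindex_sum, TN.reindex_sum]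
        rw [Finset.smul_sum]
        simp_rw [hτ'def, TN.reindex_smul]
      rw [hrw, TN.traceNorm_reindex]
    calc (1/2) * ∑ y : Fin m → Bool, traceNorm (B y - u)
        = (1/2) * ∑ y : Fin m → Bool,
            traceNorm (((2:ℝ)^d)⁻¹ • (∑ xs ∈ Fy y, τ' xs.1)
              - ((2:ℝ)^m)⁻¹ • ∑ x1, τ' x1) := by
          congr 1
          exact Finset.sum_congr rfl fun y _ => (hre y).symm
      _ ≤ ε' := hε'
  -- assemble
  have hsum : ∑ y : Fin m → Bool, traceNorm (A y - u)
      ≤ ∑ y : Fin m → Bool, traceNorm (A y - B y)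
        + ∑ y : Fin m → Bool, traceNorm (B y - u) := by
    rw [← Finset.sum_add_distrib]
    exact Finset.sum_le_sum fun y _ => htri y
  calc (1/2) * ∑ y : Fin m → Bool, traceNorm (A y - u) ≤ _ := by linarith
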